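/- For every good encoding ⟦·⟧ from π_mix into π_a and Q ≔ P | P with P ≔ (ā + a) | (b̄ + b.✓): every T ∈ π_a with ⟦Q⟧ ⟹ T satisfies T ⇓. -/
import Mathlib


set_option maxHeartbeats 1000000

/-! # Common definitions: the π-calculus with mixed choice (π_mix) and the
asynchronous π-calculus (π_a), their structural congruence and reduction
semantics, symmetric networks and symmetric executions, contexts, and
Gorla's quality criteria for encodings. -/

/-- Names. -/
abbrev Name : Type := ℕ

/-- The single-name substitution `{m/n}` mapping `n` to `m` and every other
name to itself. -/
def rename (n m : Name) : Name → Name := fun k => if k = n then m else k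

/-! ## The asynchronous π-calculus π_a -/

/-- Processes of the asynchronous π-calculus π_a:
`P ::= (νn)P | P₁ | P₂ | !P | 0 | ȳ⟨z⟩ | y(x).P | [a=b]P | ✓`. -/
inductive PiA : Type
  | nil : PiA
  | res : Name → PiA → PiA
  | par : PiA → PiA → PiA
  | repl : PiA → PiA
  | out : Name → Name → PiA
  | inp : Name → Name → PiA → PiA
  | mtch : Name → Name → PiA → PiA
  | succ : PiA
  deriving DecidableEq

namespace PiA

/-- Application of a substitution to a π_a process. -/
def subst (σ : Name → Name) : PiA → PiA
  | nil => nil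
  | res n P => res (σ n) (subst σ P)
  | par P Q => par (subst σ P) (subst σ Q)
  | repl P => repl (subst σ P)
  | out y z => out (σ y) (σ z)
  | inp y x P => inp (σ y) (σ x) (subst σ P)
  | mtch a b P => mtch (σ a) (σ b) (subst σ P)
  | succ => succ

/-- All names of a π_a process. -/
def names : PiA → Finset Name
  | nil => ∅
  | res n P => insert n (names P)
  | par P Q => names P ∪ names Q
  | repl P => names P
  | out y z => {y, z}
  | inp y x P => insert y (insert x (names P))
  | mtch a b P => insert a (insert b (names P))
  | succ => ∅

/-- Free names of a π_a process. -/
def fn : PiA → Finset Name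
  | nil => ∅
  | res n P => (fn P).erase n
  | par P Q => fn P ∪ fn Q
  | repl P => fn P
  | out y z => {y, z}
  | inp y x P => insert y ((fn P).erase x)
  | mtch a b P => insert a (insert b (fn P))
  | succ => ∅

/-- Structural congruence of π_a: the least congruence containing
α-conversion and the standard structural axioms. -/
inductive Cong : PiA → PiA → Prop
  | refl (P) : Cong P P
  | symm {P Q} : Cong P Q → Cong Q P
  | trans {P Q R} : Cong P Q → Cong Q R → Cong P R
  | resC (n) {P Q} : Cong P Q → Cong (res n P) (res n Q)
  | parC {P P' Q Q'} : Cong P P' → Cong Q Q' → Cong (par P Q) (par P' Q')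
  | replC {P Q} : Cong P Q → Cong (repl P) (repl Q)
  | inpC (y x) {P Q} : Cong P Q → Cong (inp y x P) (inp y x Q)
  | mtchC (a b) {P Q} : Cong P Q → Cong (mtch a b P) (mtch a b Q)
  | alphaRes {n m : Name} {P} : m ∉ names P →
      Cong (res n P) (res m (subst (rename n m) P))
  | alphaInp {y x x' : Name} {P} : x' ∉ names P →
      Cong (inp y x P) (inp y x' (subst (rename x x') P))
  | parNil (P) : Cong (par P nil) P
  | parComm (P Q) : Cong (par P Q) (par Q P)
  | parAssoc (P Q R) : Cong (par P (par Q R)) (par (par P Q) R)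
  | mtchId (a : Name) (P) : Cong (mtch a a P) P
  | replUnfold (P) : Cong (repl P) (par P (repl P))
  | resNil (n : Name) : Cong (res n nil) nil
  | resSwap (n m : Name) (P) : Cong (res n (res m P)) (res m (res n P))
  | resPar {n : Name} {P} (Q) : n ∉ fn P →
      Cong (par P (res n Q)) (res n (par P Q))

/-- The reduction relation ⟼ of π_a. -/
inductive Step : PiA → PiA → Prop
  | com (y x z : Name) (P) :
      Step (par (inp y x P) (out y z)) (subst (rename x z) P)
  | parS {P P'} (Q) : Step P P' → Step (par P Q) (par P' Q)
  | resS (n : Name) {P P'} : Step P P' → Step (res n P) (res n P')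
  | congS {P P' Q Q'} : Cong P P' → Step P' Q' → Cong Q' Q → Step P Q

/-- The reflexive-transitive closure ⟹ of reduction in π_a. -/
abbrev Steps : PiA → PiA → Prop := Relation.ReflTransGen Step

/-- `P` contains a top-level unguarded occurrence of ✓, i.e. `P ≡ P'' | ✓`. -/
def HasTopSuccess (P : PiA) : Prop := ∃ P'', Cong P (par P'' succ)

/-- `P` may lead to success: `P⇓`. -/
def May (P : PiA) : Prop := ∃ P', Steps P P' ∧ HasTopSuccess P'

/-- `P ⟼^ω`: `P` has an infinite sequence of reduction steps. -/
def Diverges (P : PiA) : Prop :=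
  ∃ seq : ℕ → PiA, seq 0 = P ∧ ∀ i, Step (seq i) (seq (i + 1))

end PiA

/-! ## Networks and symmetric executions in π_a -/

/-- The parallel composition `P₁ | … | Pₙ` of a list of processes. -/
def parList : List PiA → PiA
  | [] => PiA.nil
  | [P] => P
  | P :: Q :: rest => PiA.par P (parList (Q :: rest))

/-- The restriction `(νx̃)P` of a process by a sequence of names. -/
def resList : List Name → PiA → PiA
  | [], P => P
  | n :: ns, P => PiA.res n (resList ns P)

/-- `P` is a symmetric network of degree `n`: `P = (νx̃)(P₁ | … | Pₙ)` where
`Pᵢ = σ^(i-1)(P₁)` for a symmetry relation `σ` with `σⁿ = id`. -/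
def SymNetwork (n : ℕ) (P : PiA) : Prop :=
  ∃ (xs : List Name) (Ps : List PiA) (σ : Name → Name),
    Ps.length = n ∧ σ^[n] = id ∧
    (∀ i < n, Ps.getD i PiA.nil = PiA.subst (σ^[i]) (Ps.getD 0 PiA.nil)) ∧
    P = resList xs (parList Ps)

/-- `seq` (of length `len`, `none` meaning infinite) is a symmetric execution
of degree `n`: it starts at a symmetric network of degree `n`, returns to a
symmetric network of degree `n` after every `n`-th step, and is either
infinite or terminates in a symmetric network of degree `n`. -/
def IsSymExecution (n : ℕ) (seq : ℕ → PiA) (len : Option ℕ) : Prop :=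
  SymNetwork n (seq 0) ∧
  match len with
  | none =>
      (∀ i, PiA.Step (seq i) (seq (i + 1))) ∧
      (∀ k, SymNetwork n (seq (n * k)))
  | some m =>
      (∀ i < m, PiA.Step (seq i) (seq (i + 1))) ∧
      (∀ T, ¬ PiA.Step (seq m) T) ∧
      (∀ k, n * k ≤ m → SymNetwork n (seq (n * k))) ∧
      SymNetwork n (seq m)

/-! ## The π-calculus with mixed choice π_mix -/

/-- Prefixes (guards) `μ ::= y(x) | ȳ⟨z⟩`. -/
inductive Guard : Type
  | inp : Name → Name → Guard
  | out : Name → Name → Guard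
  deriving DecidableEq

/-- Application of a substitution to a guard. -/
def Guard.subst (σ : Name → Name) : Guard → Guard
  | .inp y x => .inp (σ y) (σ x)
  | .out y z => .out (σ y) (σ z)

/-- Processes of π_mix:
`P ::= (νn)P | P₁ | P₂ | !P | Σ_{i∈I} μᵢ.Pᵢ | ✓`; `0` is the empty sum. -/
inductive PiM : Type
  | res : Name → PiM → PiM
  | par : PiM → PiM → PiM
  | repl : PiM → PiM
  | sum : List (Guard × PiM) → PiM
  | succ : PiM

/-- The empty sum `0` of π_mix. -/
def zeroM : PiM := .sum []

mutual
  /-- Application of a substitution to a π_mix process. -/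
  def substM (σ : Name → Name) : PiM → PiM
    | .res n P => .res (σ n) (substM σ P)
    | .par P Q => .par (substM σ P) (substM σ Q)
    | .repl P => .repl (substM σ P)
    | .sum gs => .sum (substSummands σ gs)
    | .succ => .succ
  /-- Application of a substitution to a list of summands. -/
  def substSummands (σ : Name → Name) :
      List (Guard × PiM) → List (Guard × PiM)
    | [] => []
    | (g, P) :: rest => (g.subst σ, substM σ P) :: substSummands σ rest
end

mutual
  /-- All names of a π_mix process. -/
  def namesM : PiM → Finset Name
    | .res n P => insert n (namesM P)
    | .par P Q => namesM P ∪ namesM Q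
    | .repl P => namesM P
    | .sum gs => namesSummands gs
    | .succ => ∅
  /-- All names of a list of summands. -/
  def namesSummands : List (Guard × PiM) → Finset Name
    | [] => ∅
    | (.inp y x, P) :: rest =>
        insert y (insert x (namesM P)) ∪ namesSummands rest
    | (.out y z, P) :: rest =>
        insert y (insert z (namesM P)) ∪ namesSummands rest
end

mutual
  /-- Free names of a π_mix process. -/
  def fnM : PiM → Finset Name
    | .res n P => (fnM P).erase n
    | .par P Q => fnM P ∪ fnM Q
    | .repl P => fnM P
    | .sum gs => fnSummands gs
    | .succ => ∅
  /-- Free names of a list of summands. -/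
  def fnSummands : List (Guard × PiM) → Finset Name
    | [] => ∅
    | (.inp y x, P) :: rest => insert y ((fnM P).erase x) ∪ fnSummands rest
    | (.out y z, P) :: rest => insert y (insert z (fnM P)) ∪ fnSummands rest
end

/-- Structural congruence of π_mix. -/
inductive CongM : PiM → PiM → Prop
  | refl (P) : CongM P P
  | symm {P Q} : CongM P Q → CongM Q P
  | trans {P Q R} : CongM P Q → CongM Q R → CongM P R
  | resC (n : Name) {P Q} : CongM P Q → CongM (.res n P) (.res n Q)
  | parC {P P' Q Q'} : CongM P P' → CongM Q Q' → CongM (.par P Q) (.par P' Q')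
  | replC {P Q} : CongM P Q → CongM (.repl P) (.repl Q)
  | alphaRes {n m : Name} {P} : m ∉ namesM P →
      CongM (.res n P) (.res m (substM (rename n m) P))
  | alphaInp {gs₁ gs₂ : List (Guard × PiM)} {y x x' : Name} {P} :
      x' ∉ namesM P →
      CongM (.sum (gs₁ ++ (Guard.inp y x, P) :: gs₂))
            (.sum (gs₁ ++ (Guard.inp y x', substM (rename x x') P) :: gs₂))
  | sumPerm {gs gs' : List (Guard × PiM)} : gs.Perm gs' →
      CongM (.sum gs) (.sum gs')
  | parNil (P) : CongM (.par P zeroM) P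
  | parComm (P Q) : CongM (.par P Q) (.par Q P)
  | parAssoc (P Q R) : CongM (.par P (.par Q R)) (.par (.par P Q) R)
  | replUnfold (P) : CongM (.repl P) (.par P (.repl P))
  | resNil (n : Name) : CongM (.res n zeroM) zeroM
  | resSwap (n m : Name) (P) : CongM (.res n (.res m P)) (.res m (.res n P))
  | resPar {n : Name} {P} (Q) : n ∉ fnM P →
      CongM (.par P (.res n Q)) (.res n (.par P Q))

/-- The reduction relation ⟼ of π_mix:
`(…+ y(x).P +…) | (…+ ȳ⟨z⟩.Q +…) ⟼ P{z/x} | Q`, closed under parallel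
composition, restriction and structural congruence. -/
inductive StepM : PiM → PiM → Prop
  | com {gs₁ gs₂ : List (Guard × PiM)} {y x z : Name} {P Q : PiM} :
      (Guard.inp y x, P) ∈ gs₁ → (Guard.out y z, Q) ∈ gs₂ →
      StepM (.par (.sum gs₁) (.sum gs₂)) (.par (substM (rename x z) P) Q)
  | parS {P P'} (Q) : StepM P P' → StepM (.par P Q) (.par P' Q)
  | resS (n : Name) {P P'} : StepM P P' → StepM (.res n P) (.res n P')
  | congS {P P' Q Q'} : CongM P P' → StepM P' Q' → CongM Q' Q → StepM P Q

/-- The reflexive-transitive closure ⟹ of reduction in π_mix. -/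
abbrev StepsM : PiM → PiM → Prop := Relation.ReflTransGen StepM

/-- `S` contains a top-level unguarded occurrence of ✓, i.e. `S ≡ S'' | ✓`. -/
def HasTopSuccessM (S : PiM) : Prop := ∃ S'', CongM S (.par S'' .succ)

/-- `S` may lead to success: `S⇓`. -/
def MayM (S : PiM) : Prop := ∃ S', StepsM S S' ∧ HasTopSuccessM S'

/-- `S ⟼^ω`: `S` has an infinite sequence of reduction steps. -/
def DivergesM (S : PiM) : Prop :=
  ∃ seq : ℕ → PiM, seq 0 = S ∧ ∀ i, StepM (seq i) (seq (i + 1))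

/-- `seq` (of length `len`, `none` meaning infinite) is a maximal execution:
it is either infinite or terminates in a process with no reduction step. -/
def IsMaxExecutionM (seq : ℕ → PiM) (len : Option ℕ) : Prop :=
  match len with
  | none => ∀ i, StepM (seq i) (seq (i + 1))
  | some m => (∀ i < m, StepM (seq i) (seq (i + 1))) ∧ ∀ T, ¬ StepM (seq m) T

/-! ## α-equivalence on π_a -/

/-- α-conversion ≡α on π_a: the least congruence allowing renaming of
bound names (avoiding name clashes). -/
inductive AlphaA : PiA → PiA → Prop
  | refl (P) : AlphaA P P
  | symm {P Q} : AlphaA P Q → AlphaA Q P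
  | trans {P Q R} : AlphaA P Q → AlphaA Q R → AlphaA P R
  | resC (n : Name) {P Q} : AlphaA P Q → AlphaA (.res n P) (.res n Q)
  | parC {P P' Q Q'} : AlphaA P P' → AlphaA Q Q' → AlphaA (.par P Q) (.par P' Q')
  | replC {P Q} : AlphaA P Q → AlphaA (.repl P) (.repl Q)
  | inpC (y x : Name) {P Q} : AlphaA P Q → AlphaA (.inp y x P) (.inp y x Q)
  | mtchC (a b : Name) {P Q} : AlphaA P Q → AlphaA (.mtch a b P) (.mtch a b Q)
  | alphaRes {n m : Name} {P} : m ∉ PiA.names P →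
      AlphaA (.res n P) (.res m (PiA.subst (rename n m) P))
  | alphaInp {y x x' : Name} {P} : x' ∉ PiA.names P →
      AlphaA (.inp y x P) (.inp y x' (PiA.subst (rename x x') P))

/-! ## Contexts of π_a -/

/-- `k`-ary contexts of π_a: π_a-terms with holes `·ᵢ`, `i : Fin k`. -/
inductive CtxA : ℕ → Type
  | hole {k} : Fin k → CtxA k
  | nil {k} : CtxA k
  | res {k} : Name → CtxA k → CtxA k
  | par {k} : CtxA k → CtxA k → CtxA k
  | repl {k} : CtxA k → CtxA k
  | out {k} : Name → Name → CtxA k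
  | inp {k} : Name → Name → CtxA k → CtxA k
  | mtch {k} : Name → Name → CtxA k → CtxA k
  | succ {k} : CtxA k

/-- Filling the holes of a context with processes. -/
def CtxA.fill {k : ℕ} : CtxA k → (Fin k → PiA) → PiA
  | .hole i, f => f i
  | .nil, _ => .nil
  | .res n C, f => .res n (C.fill f)
  | .par C D, f => .par (C.fill f) (D.fill f)
  | .repl C, f => .repl (C.fill f)
  | .out y z, _ => .out y z
  | .inp y x C, f => .inp y x (C.fill f)
  | .mtch a b C, f => .mtch a b (C.fill f)
  | .succ, _ => .succ

/-- The number of occurrences of hole `·ᵢ` in a context. -/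
def CtxA.holeCount {k : ℕ} : CtxA k → Fin k → ℕ
  | .hole i, j => if i = j then 1 else 0
  | .nil, _ => 0
  | .res _ C, j => C.holeCount j
  | .par C D, j => C.holeCount j + D.holeCount j
  | .repl C, j => C.holeCount j
  | .out _ _, _ => 0
  | .inp _ _ C, j => C.holeCount j
  | .mtch _ _ C, j => C.holeCount j
  | .succ, _ => 0

/-! ## Operators of π_mix -/

/-- The operators of π_mix: restriction, parallel composition, replication,
a sum operator for every finite list of prefixes, and ✓. -/
inductive MixOp : Type
  | res : Name → MixOp
  | par : MixOp
  | repl : MixOp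
  | sum : List Guard → MixOp
  | succ : MixOp

/-- The arity of a π_mix operator. -/
def MixOp.arity : MixOp → ℕ
  | .res _ => 1
  | .par => 2
  | .repl => 1
  | .sum gs => gs.length
  | .succ => 0

/-- Applying a π_mix operator to arguments. -/
def MixOp.apply : (op : MixOp) → (Fin op.arity → PiM) → PiM
  | .res n, f => .res n (f ⟨0, by simp [MixOp.arity]⟩)
  | .par, f => .par (f ⟨0, by simp [MixOp.arity]⟩) (f ⟨1, by simp [MixOp.arity]⟩)
  | .repl, f => .repl (f ⟨0, by simp [MixOp.arity]⟩)
  | .sum gs, f => .sum (List.ofFn fun i : Fin gs.length => (gs.get i, f i))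
  | .succ, _ => .succ

/-! ## Quality criteria for encodings (Gorla) -/

/-- Criterion 1 (Compositionality): for every operator `op` of π_mix and
every set of names `N` there is a context `C_op^N` such that
`⟦op(S₁,…,S_k)⟧ = C_op^N(⟦S₁⟧,…,⟦S_k⟧)` whenever `fn(S₁) ∪ … ∪ fn(S_k) = N`. -/
def Compositional (enc : PiM → PiA) : Prop :=
  ∀ (op : MixOp) (N : Finset Name), ∃ C : CtxA op.arity,
    ∀ f : Fin op.arity → PiM,
      (Finset.univ.biUnion fun i => fnM (f i)) = N →
      enc (op.apply f) = C.fill (fun i => enc (f i))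

/-- A renaming policy keeps distinct names distinct:
`n ≠ m` implies `φ(n) ∩ φ(m) = ∅`. -/
def PolicyOK (φ : Name → List Name) : Prop :=
  ∀ n m : Name, n ≠ m → ∀ x ∈ φ n, x ∉ φ m

/-- Criterion 2 (Name invariance) w.r.t. a renaming policy `φ`:
`⟦σ(S)⟧ ≡α σ'(⟦S⟧)` if `σ` is injective and `⟦σ(S)⟧ ≍ σ'(⟦S⟧)` otherwise,
where `σ'` is such that `φ(σ(a)) = σ'(φ(a))` for every name `a`. -/
def NameInvariant (enc : PiM → PiA) (equiv : PiA → PiA → Prop)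
    (φ : Name → List Name) : Prop :=
  ∀ (S : PiM) (σ : Name → Name), ∃ σ' : Name → Name,
    (∀ a : Name, φ (σ a) = (φ a).map σ') ∧
    (Function.Injective σ →
      AlphaA (enc (substM σ S)) (PiA.subst σ' (enc S))) ∧
    (¬ Function.Injective σ →
      equiv (enc (substM σ S)) (PiA.subst σ' (enc S)))

/-- Operational completeness: `S ⟹ S'` implies `⟦S⟧ ⟹ ≍ ⟦S'⟧`. -/
def OperationallyComplete (enc : PiM → PiA) (equiv : PiA → PiA → Prop) : Prop :=
  ∀ S S', StepsM S S' → ∃ T, PiA.Steps (enc S) T ∧ equiv T (enc S')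

/-- Operational soundness: `⟦S⟧ ⟹ T` implies `S ⟹ S'` and `T ⟹ ≍ ⟦S'⟧`
for some `S'`. -/
def OperationallySound (enc : PiM → PiA) (equiv : PiA → PiA → Prop) : Prop :=
  ∀ S T, PiA.Steps (enc S) T →
    ∃ S' T', StepsM S S' ∧ PiA.Steps T T' ∧ equiv T' (enc S')

/-- Criterion 4 (Divergence reflection): `⟦S⟧ ⟼^ω` implies `S ⟼^ω`. -/
def DivergenceReflecting (enc : PiM → PiA) : Prop :=
  ∀ S, PiA.Diverges (enc S) → DivergesM S

/-- Criterion 5 (Success sensitiveness): `S⇓` iff `⟦S⟧⇓`. -/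
def SuccessSensitive (enc : PiM → PiA) : Prop :=
  ∀ S, MayM S ↔ PiA.May (enc S)

/-- `≍` is success respecting: `P⇓` and `Q⇓̸` imply `P ≭ Q`. -/
def SuccessRespecting (equiv : PiA → PiA → Prop) : Prop :=
  ∀ T₁ T₂, PiA.May T₁ → ¬ PiA.May T₂ → ¬ equiv T₁ T₂

/-- A good encoding from π_mix into π_a w.r.t. a success-respecting
behavioural equivalence `≍` on π_a and a renaming policy `φ`: it is
compositional, name invariant, operationally corresponding, divergence
reflecting and success sensitive. -/
structure GoodEncoding (enc : PiM → PiA) (equiv : PiA → PiA → Prop)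
    (φ : Name → List Name) : Prop where
  equivEquivalence : Equivalence equiv
  successRespecting : SuccessRespecting equiv
  policyOK : PolicyOK φ
  compositional : Compositional enc
  nameInvariant : NameInvariant enc equiv φ
  complete : OperationallyComplete enc equiv
  sound : OperationallySound enc equiv
  divergenceReflecting : DivergenceReflecting enc
  successSensitive : SuccessSensitive enc

/-! ## The concrete counterexample terms (prefixes CCS-like, objects omitted) -/

/-- The sum `ā + a`. -/
def aSum (a : Name) : PiM := .sum [(Guard.out a a, zeroM), (Guard.inp a a, zeroM)]

/-- The sum `b̄ + b.✓`. -/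
def bSum (b : Name) : PiM := .sum [(Guard.out b b, zeroM), (Guard.inp b b, .succ)]

/-- `P ≔ (ā + a) | (b̄ + b.✓)`. -/
def Pterm (a b : Name) : PiM := .par (aSum a) (bSum b)

/-- `Q ≔ P | P`. -/
def Qterm (a b : Name) : PiM := .par (Pterm a b) (Pterm a b)

/-- The sum `ā + b + b.✓`. -/
def rSum1 (a b : Name) : PiM :=
  .sum [(Guard.out a a, zeroM), (Guard.inp b b, zeroM), (Guard.inp b b, .succ)]

/-- The sum `b̄ + a + a.✓`. -/
def rSum2 (a b : Name) : PiM :=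
  .sum [(Guard.out b b, zeroM), (Guard.inp a a, zeroM), (Guard.inp a a, .succ)]

/-- `R ≔ (ā + b + b.✓) | (b̄ + a + a.✓)`. -/
def Rterm (a b : Name) : PiM := .par (rSum1 a b) (rSum2 a b)

/-! STATEMENT 7: For every good encoding and `Q ≔ P | P` with
`P ≔ (ā + a) | (b̄ + b.✓)`: every `T` with `⟦Q⟧ ⟹ T` satisfies `T ⇓`. -/

/-! ### Auxiliary development for Statement 7 -/

def PiM.indNoSum {motive : PiM → Prop}
    (hres : ∀ n P, motive P → motive (.res n P))
    (hpar : ∀ P Q, motive P → motive Q → motive (.par P Q))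
    (hrepl : ∀ P, motive P → motive (.repl P))
    (hsum : ∀ gs, motive (.sum gs))
    (hsucc : motive .succ) : ∀ P, motive P
  | .res n P => hres n P (PiM.indNoSum hres hpar hrepl hsum hsucc P)
  | .par P Q => hpar P Q (PiM.indNoSum hres hpar hrepl hsum hsucc P)
      (PiM.indNoSum hres hpar hrepl hsum hsucc Q)
  | .repl P => hrepl P (PiM.indNoSum hres hpar hrepl hsum hsucc P)
  | .sum gs => hsum gs
  | .succ => hsucc

theorem substSummands_eq_map (σ : Name → Name) (gs : List (Guard × PiM)) :
    substSummands σ gs = gs.map (fun p => (p.1.subst σ, substM σ p.2)) := by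
  induction gs with
  | nil => simp [substSummands]
  | cons p rest ih => cases p; simp [substSummands, ih]

theorem substM_eq_zeroM {σ : Name → Name} {P : PiM} :
    substM σ P = zeroM ↔ P = zeroM := by
  cases P <;> simp [substM, zeroM, substSummands_eq_map]

theorem substM_eq_succ {σ : Name → Name} {P : PiM} :
    substM σ P = PiM.succ ↔ P = PiM.succ := by
  cases P <;> simp [substM]

theorem substM_zeroM (σ : Name → Name) : substM σ zeroM = zeroM := by
  simp [zeroM, substM, substSummands]

theorem substM_succ (σ : Name → Name) : substM σ PiM.succ = PiM.succ := rfl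

/-- A sum of exactly two summands: an output on `s` with continuation `0` and
an input on `s` with continuation `c`. -/
def isSum2 (s : Name) (c : PiM) (gs : List (Guard × PiM)) : Prop :=
  gs.length = 2 ∧ (∃ z, (Guard.out s z, zeroM) ∈ gs) ∧ (∃ x, (Guard.inp s x, c) ∈ gs)

theorem isSum2_pin_inp {s : Name} {c : PiM} {gs} (h : isSum2 s c gs)
    {y x : Name} {P : PiM} (hm : (Guard.inp y x, P) ∈ gs) : y = s ∧ P = c := by
  obtain ⟨hl, ⟨z, hz⟩, ⟨x₀, hx⟩⟩ := h
  obtain ⟨p, q, rfl⟩ := List.length_eq_two.mp hl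
  simp only [List.mem_cons, List.not_mem_nil, or_false] at hm hz hx
  rcases hm with hm | hm <;> rcases hz with hz | hz <;> rcases hx with hx | hx <;>
    (try subst hm) <;> (try subst hz) <;> (try subst hx) <;> simp_all

theorem isSum2_pin_out {s : Name} {c : PiM} {gs} (h : isSum2 s c gs)
    {y z : Name} {P : PiM} (hm : (Guard.out y z, P) ∈ gs) : y = s ∧ P = zeroM := by
  obtain ⟨hl, ⟨z₀, hz⟩, ⟨x₀, hx⟩⟩ := h
  obtain ⟨p, q, rfl⟩ := List.length_eq_two.mp hl
  simp only [List.mem_cons, List.not_mem_nil, or_false] at hm hz hx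
  rcases hm with hm | hm <;> rcases hz with hz | hz <;> rcases hx with hx | hx <;>
    (try subst hm) <;> (try subst hz) <;> (try subst hx) <;> simp_all

theorem isSum2_exclusive {s t : Name} {c d : PiM} (hst : s ≠ t) {gs}
    (hs : isSum2 s c gs) (ht : isSum2 t d gs) : False := by
  obtain ⟨z, hz⟩ := ht.2.1
  exact hst ((isSum2_pin_out hs hz).1.symm)

theorem isSum2_nil {s : Name} {c : PiM} : ¬ isSum2 s c [] := by
  rintro ⟨hl, _⟩; simp at hl

theorem isSum2_perm {s : Name} {c : PiM} {gs gs'} (h : gs.Perm gs') :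
    isSum2 s c gs ↔ isSum2 s c gs' := by
  unfold isSum2
  rw [h.length_eq]
  simp only [h.mem_iff]

theorem isSum2_mem_fn {s : Name} {c : PiM} {gs} (h : isSum2 s c gs) :
    s ∈ fnSummands gs := by
  obtain ⟨_, ⟨z, hz⟩, _⟩ := h
  clear * - hz
  induction gs with
  | nil => simp at hz
  | cons p rest ih =>
    rcases List.mem_cons.mp hz with h | h
    · subst h; simp [fnSummands]
    · obtain ⟨g, P⟩ := p
      cases g <;> simp [fnSummands, ih h]

theorem isSum2_mem_names {s : Name} {c : PiM} {gs} (h : isSum2 s c gs) :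
    s ∈ namesSummands gs := by
  obtain ⟨_, ⟨z, hz⟩, _⟩ := h
  clear * - hz
  induction gs with
  | nil => simp at hz
  | cons p rest ih =>
    rcases List.mem_cons.mp hz with h | h
    · subst h; simp [namesSummands]
    · obtain ⟨g, P⟩ := p
      cases g <;> simp [namesSummands, ih h]

theorem isSum2_subst_iff {s : Name} {c : PiM} {σ : Name → Name}
    (hc1 : ∀ τ, substM τ c = c) (hc2 : ∀ τ (P : PiM), substM τ P = c → P = c)
    (hσs : σ s = s) (hσr : ∀ k, σ k = s → k = s) (gs : List (Guard × PiM)) :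
    isSum2 s c (substSummands σ gs) ↔ isSum2 s c gs := by
  rw [substSummands_eq_map]
  unfold isSum2
  simp only [List.length_map]
  refine and_congr Iff.rfl (and_congr ?_ ?_)
  · constructor
    · rintro ⟨z, hz⟩
      obtain ⟨⟨g, P⟩, hmem, heq⟩ := List.mem_map.mp hz
      cases g with
      | inp => simp [Guard.subst] at heq
      | out y w =>
        simp only [Guard.subst, Prod.mk.injEq, Guard.out.injEq] at heq
        obtain ⟨⟨hy, -⟩, hP⟩ := heq
        exact ⟨w, by rw [hσr y hy, substM_eq_zeroM.mp hP] at hmem; exact hmem⟩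
    · rintro ⟨z, hz⟩
      exact ⟨σ z, List.mem_map.mpr ⟨_, hz, by simp [Guard.subst, hσs, substM_zeroM]⟩⟩
  · constructor
    · rintro ⟨x, hx⟩
      obtain ⟨⟨g, P⟩, hmem, heq⟩ := List.mem_map.mp hx
      cases g with
      | out => simp [Guard.subst] at heq
      | inp y w =>
        simp only [Guard.subst, Prod.mk.injEq, Guard.inp.injEq] at heq
        obtain ⟨⟨hy, -⟩, hP⟩ := heq
        exact ⟨w, by rw [hσr y hy, hc2 σ P hP] at hmem; exact hmem⟩
    · rintro ⟨x, hx⟩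
      exact ⟨σ x, List.mem_map.mpr ⟨_, hx, by simp [Guard.subst, hσs, hc1]⟩⟩

theorem isSum2_subst_kill {s : Name} {c : PiM} {σ : Name → Name}
    (hσ : ∀ k, σ k ≠ s) (gs : List (Guard × PiM)) :
    ¬ isSum2 s c (substSummands σ gs) := by
  rw [substSummands_eq_map]
  rintro ⟨-, ⟨z, hz⟩, -⟩
  obtain ⟨⟨g, P⟩, hmem, heq⟩ := List.mem_map.mp hz
  cases g with
  | inp => simp [Guard.subst] at heq
  | out y w =>
    simp only [Guard.subst, Prod.mk.injEq, Guard.out.injEq] at heq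
    exact hσ y heq.1.1

/-- `isSum2` is stable under the α-conversion of one input summand. -/
theorem isSum2_alphaInp {s : Name} {c : PiM}
    (hc1 : ∀ τ, substM τ c = c) (hc2 : ∀ τ (P : PiM), substM τ P = c → P = c)
    {gs₁ gs₂ : List (Guard × PiM)} {y x x' : Name} {P : PiM} :
    isSum2 s c (gs₁ ++ (Guard.inp y x, P) :: gs₂) ↔
    isSum2 s c (gs₁ ++ (Guard.inp y x', substM (rename x x') P) :: gs₂) := by
  unfold isSum2
  simp only [List.length_append, List.length_cons]
  refine and_congr Iff.rfl (and_congr ?_ ?_)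
  · simp only [List.mem_append, List.mem_cons, Prod.mk.injEq]
    constructor <;> rintro ⟨z, hz⟩ <;> exact ⟨z, by tauto⟩
  · simp only [List.mem_append, List.mem_cons, Prod.mk.injEq, Guard.inp.injEq]
    constructor
    · rintro ⟨z, hz | ⟨⟨h1, h2⟩, h3⟩ | hz⟩
      · exact ⟨z, Or.inl hz⟩
      · exact ⟨x', Or.inr (Or.inl ⟨⟨h1, rfl⟩, by rw [← h3, hc1]⟩)⟩
      · exact ⟨z, Or.inr (Or.inr hz)⟩
    · rintro ⟨z, hz | ⟨⟨h1, h2⟩, h3⟩ | hz⟩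
      · exact ⟨z, Or.inl hz⟩
      · exact ⟨x, Or.inr (Or.inl ⟨⟨h1, rfl⟩, (hc2 _ _ h3.symm).symm⟩)⟩
      · exact ⟨z, Or.inr (Or.inr hz)⟩

theorem zeroM_stable : (∀ τ, substM τ zeroM = zeroM) ∧
    (∀ τ (P : PiM), substM τ P = zeroM → P = zeroM) :=
  ⟨substM_zeroM, fun _ _ h => substM_eq_zeroM.mp h⟩

theorem succ_stable : (∀ τ, substM τ PiM.succ = PiM.succ) ∧
    (∀ τ (P : PiM), substM τ P = PiM.succ → P = PiM.succ) :=
  ⟨substM_succ, fun _ _ h => substM_eq_succ.mp h⟩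

/-! ### Unguarded-occurrence predicates -/

def hasSucc : PiM → Prop
  | .res _ P => hasSucc P
  | .par P Q => hasSucc P ∨ hasSucc Q
  | .repl P => hasSucc P
  | .sum _ => False
  | .succ => True

def hasOne (s : Name) (c : PiM) : Bool → PiM → Prop
  | bl, .res n P => hasOne s c (bl || (n == s)) P
  | bl, .par P Q => hasOne s c bl P ∨ hasOne s c bl Q
  | bl, .repl P => hasOne s c bl P
  | bl, .sum gs => bl = false ∧ isSum2 s c gs
  | _, .succ => False

def hasTwo (s : Name) (c : PiM) : Bool → PiM → Prop
  | bl, .res n P => hasTwo s c (bl || (n == s)) P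
  | bl, .par P Q => hasTwo s c bl P ∨ hasTwo s c bl Q ∨ (hasOne s c bl P ∧ hasOne s c bl Q)
  | bl, .repl P => hasOne s c bl P
  | _, .sum _ => False
  | _, .succ => False

def goodSum (a b : Name) (bA bB : Bool) (gs : List (Guard × PiM)) : Prop :=
  gs = [] ∨ (bA = false ∧ isSum2 a zeroM gs) ∨ (bB = false ∧ isSum2 b PiM.succ gs)

def onlyGood (a b : Name) : Bool → Bool → PiM → Prop
  | bA, bB, .res n P => onlyGood a b (bA || (n == a)) (bB || (n == b)) P
  | bA, bB, .par P Q => onlyGood a b bA bB P ∧ onlyGood a b bA bB Q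
  | bA, bB, .repl P => onlyGood a b bA bB P
  | bA, bB, .sum gs => goodSum a b bA bB gs
  | _, _, .succ => True

theorem hasSucc_subst (σ : Name → Name) (P : PiM) :
    hasSucc (substM σ P) ↔ hasSucc P := by
  induction P using PiM.indNoSum <;> simp [substM, hasSucc, *]

theorem hasOne_true {s : Name} {c : PiM} (P : PiM) : ¬ hasOne s c true P := by
  induction P using PiM.indNoSum <;> simp [hasOne, *]

theorem hasTwo_true {s : Name} {c : PiM} (P : PiM) : ¬ hasTwo s c true P := by
  induction P using PiM.indNoSum <;> simp [hasTwo, hasOne_true, *]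

theorem hasTwo_imp_hasOne {s : Name} {c : PiM} :
    ∀ (P : PiM) (bl : Bool), hasTwo s c bl P → hasOne s c bl P := by
  intro P
  induction P using PiM.indNoSum with
  | hres n P ih => intro bl h; exact ih _ h
  | hpar P Q ihP ihQ =>
    intro bl h
    rcases h with h | h | ⟨h, -⟩
    · exact Or.inl (ihP _ h)
    · exact Or.inr (ihQ _ h)
    · exact Or.inl h
  | hrepl P ih => intro bl h; exact h
  | hsum gs => intro bl h; exact h.elim
  | hsucc => intro bl h; exact h.elim

theorem hasOne_fn {s : Name} {c : PiM} :
    ∀ (P : PiM) (bl : Bool), hasOne s c bl P → bl = false ∧ s ∈ fnM P := by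
  intro P
  induction P using PiM.indNoSum with
  | hres n P ih =>
    intro bl h
    obtain ⟨h1, h2⟩ := ih _ h
    rcases Bool.or_eq_false_iff.mp h1 with ⟨hbl, hns⟩
    refine ⟨hbl, ?_⟩
    simp only [fnM]
    exact Finset.mem_erase.mpr ⟨fun hsn => (by simpa using hns : ¬ n = s) hsn.symm, h2⟩
  | hpar P Q ihP ihQ =>
    intro bl h
    rcases h with h | h
    · obtain ⟨h1, h2⟩ := ihP _ h
      exact ⟨h1, by simp [fnM, h2]⟩
    · obtain ⟨h1, h2⟩ := ihQ _ h
      exact ⟨h1, by simp [fnM, h2]⟩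
  | hrepl P ih => intro bl h; simpa [fnM] using ih _ h
  | hsum gs => intro bl h; exact ⟨h.1, isSum2_mem_fn h.2⟩
  | hsucc => intro bl h; exact h.elim

theorem hasOne_names {s : Name} {c : PiM} :
    ∀ (P : PiM) (bl : Bool), hasOne s c bl P → bl = false ∧ s ∈ namesM P := by
  intro P
  induction P using PiM.indNoSum with
  | hres n P ih =>
    intro bl h
    obtain ⟨h1, h2⟩ := ih _ h
    rcases Bool.or_eq_false_iff.mp h1 with ⟨hbl, -⟩
    exact ⟨hbl, by simp [namesM, h2]⟩
  | hpar P Q ihP ihQ =>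
    intro bl h
    rcases h with h | h
    · obtain ⟨h1, h2⟩ := ihP _ h; exact ⟨h1, by simp [namesM, h2]⟩
    · obtain ⟨h1, h2⟩ := ihQ _ h; exact ⟨h1, by simp [namesM, h2]⟩
  | hrepl P ih => intro bl h; simpa [namesM] using ih _ h
  | hsum gs => intro bl h; exact ⟨h.1, isSum2_mem_names h.2⟩
  | hsucc => intro bl h; exact h.elim

/-- If `s` is not free in `P`, the blocking flag is irrelevant for `hasOne`. -/
theorem hasOne_flag_irrel {s : Name} {c : PiM} :
    ∀ (P : PiM), s ∉ fnM P → ∀ bl bl', (hasOne s c bl P ↔ hasOne s c bl' P) := by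
  intro P
  induction P using PiM.indNoSum with
  | hres n P ih =>
    intro hs bl bl'
    by_cases hns : n = s
    · subst hns
      simp only [hasOne, beq_self_eq_true, Bool.or_true]
    · have hs' : s ∉ fnM P := fun h =>
        hs (by simp only [fnM, Finset.mem_erase]; exact ⟨Ne.symm hns, h⟩)
      simpa [hasOne] using ih hs' _ _
  | hpar P Q ihP ihQ =>
    intro hs bl bl'
    simp only [fnM, Finset.mem_union, not_or] at hs
    simp only [hasOne]
    exact or_congr (ihP hs.1 _ _) (ihQ hs.2 _ _)
  | hrepl P ih => intro hs bl bl'; exact ih (by simpa [fnM] using hs) _ _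
  | hsum gs =>
    intro hs bl bl'
    simp only [hasOne]
    constructor <;> rintro ⟨-, h2⟩ <;> exact absurd (isSum2_mem_fn h2) (by simpa [fnM] using hs)
  | hsucc => intro _ _ _; exact Iff.rfl

theorem hasTwo_flag_irrel {s : Name} {c : PiM} :
    ∀ (P : PiM), s ∉ fnM P → ∀ bl bl', (hasTwo s c bl P ↔ hasTwo s c bl' P) := by
  intro P
  induction P using PiM.indNoSum with
  | hres n P ih =>
    intro hs bl bl'
    by_cases hns : n = s
    · subst hns
      simp only [hasTwo, beq_self_eq_true, Bool.or_true]
    · have hs' : s ∉ fnM P := fun h =>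
        hs (by simp only [fnM, Finset.mem_erase]; exact ⟨Ne.symm hns, h⟩)
      simpa [hasTwo] using ih hs' _ _
  | hpar P Q ihP ihQ =>
    intro hs bl bl'
    simp only [fnM, Finset.mem_union, not_or] at hs
    simp only [hasTwo]
    exact or_congr (ihP hs.1 _ _) (or_congr (ihQ hs.2 _ _)
      (and_congr (hasOne_flag_irrel P hs.1 _ _) (hasOne_flag_irrel Q hs.2 _ _)))
  | hrepl P ih =>
    intro hs bl bl'
    simpa [hasTwo] using hasOne_flag_irrel P (by simpa [fnM] using hs) bl bl'
  | hsum gs => intro _ _ _; exact Iff.rfl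
  | hsucc => intro _ _ _; exact Iff.rfl

theorem onlyGood_flag_irrelA {a b : Name} :
    ∀ (P : PiM), a ∉ fnM P → ∀ bA bA' bB, (onlyGood a b bA bB P ↔ onlyGood a b bA' bB P) := by
  intro P
  induction P using PiM.indNoSum with
  | hres n P ih =>
    intro hs bA bA' bB
    by_cases hns : n = a
    · subst hns
      simp only [onlyGood, beq_self_eq_true, Bool.or_true]
    · have hs' : a ∉ fnM P := fun h =>
        hs (by simp only [fnM, Finset.mem_erase]; exact ⟨Ne.symm hns, h⟩)
      simpa [onlyGood] using ih hs' _ _ _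
  | hpar P Q ihP ihQ =>
    intro hs bA bA' bB
    simp only [fnM, Finset.mem_union, not_or] at hs
    exact and_congr (ihP hs.1 _ _ _) (ihQ hs.2 _ _ _)
  | hrepl P ih => intro hs bA bA' bB; exact ih (by simpa [fnM] using hs) _ _ _
  | hsum gs =>
    intro hs bA bA' bB
    simp only [onlyGood, goodSum]
    refine or_congr Iff.rfl (or_congr ?_ Iff.rfl)
    constructor <;> rintro ⟨-, h2⟩ <;>
      exact absurd (isSum2_mem_fn h2) (by simpa [fnM] using hs)
  | hsucc => intro _ _ _ _; exact Iff.rfl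

theorem onlyGood_flag_irrelB {a b : Name} :
    ∀ (P : PiM), b ∉ fnM P → ∀ bA bB bB', (onlyGood a b bA bB P ↔ onlyGood a b bA bB' P) := by
  intro P
  induction P using PiM.indNoSum with
  | hres n P ih =>
    intro hs bA bB bB'
    by_cases hns : n = b
    · subst hns
      simp only [onlyGood, beq_self_eq_true, Bool.or_true]
    · have hs' : b ∉ fnM P := fun h =>
        hs (by simp only [fnM, Finset.mem_erase]; exact ⟨Ne.symm hns, h⟩)
      simpa [onlyGood] using ih hs' _ _ _
  | hpar P Q ihP ihQ =>
    intro hs bA bB bB'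
    simp only [fnM, Finset.mem_union, not_or] at hs
    exact and_congr (ihP hs.1 _ _ _) (ihQ hs.2 _ _ _)
  | hrepl P ih => intro hs bA bB bB'; exact ih (by simpa [fnM] using hs) _ _ _
  | hsum gs =>
    intro hs bA bB bB'
    simp only [onlyGood, goodSum]
    refine or_congr Iff.rfl (or_congr Iff.rfl ?_)
    constructor <;> rintro ⟨-, h2⟩ <;>
      exact absurd (isSum2_mem_fn h2) (by simpa [fnM] using hs)
  | hsucc => intro _ _ _ _; exact Iff.rfl

/-! ### Renaming conditions and substitution lemmas -/

def Cond (s : Name) (σ : Name → Name) (P : PiM) (bl bl' : Bool) : Prop :=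
  (bl = false → bl' = false → σ s = s ∧ ∀ k, σ k = s → k = s) ∧
  (bl = true → bl' = false → ∀ k, σ k ≠ s) ∧
  (bl = false → bl' = true → s ∉ namesM P)

theorem Cond.mono {s σ P P' bl bl'} (hsub : namesM P' ⊆ namesM P)
    (h : Cond s σ P bl bl') : Cond s σ P' bl bl' :=
  ⟨h.1, h.2.1, fun h1 h2 hm => h.2.2 h1 h2 (hsub hm)⟩

theorem rename_reflect {n m s : Name} (hns : n ≠ s) (hms : m ≠ s) :
    rename n m s = s ∧ ∀ k, rename n m k = s → k = s := by
  constructor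
  · show (if s = n then m else s) = s
    rw [if_neg (Ne.symm hns)]
  · intro k h
    by_cases hk : k = n
    · subst hk; simp only [rename, if_pos rfl] at h; exact absurd h hms
    · simpa [rename, hk] using h

theorem rename_kill {s m : Name} (hms : m ≠ s) : ∀ k, rename s m k ≠ s := by
  intro k
  by_cases hk : k = s
  · subst hk; simpa [rename] using hms
  · simpa [rename, hk] using hk

theorem Cond.res {s : Name} {σ : Name → Name} {n : Name} {P : PiM} {bl bl' : Bool}
    (h : Cond s σ (PiM.res n P) bl bl') :
    Cond s σ P (bl || (n == s)) (bl' || (σ n == s)) := by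
  obtain ⟨hff, htf, hft⟩ := h
  refine ⟨?_, ?_, ?_⟩
  · intro h1 h2
    rcases Bool.or_eq_false_iff.mp h1 with ⟨hb, -⟩
    rcases Bool.or_eq_false_iff.mp h2 with ⟨hb', -⟩
    exact hff hb hb'
  · intro h1 h2
    rcases Bool.or_eq_false_iff.mp h2 with ⟨hb', hσn⟩
    cases bl with
    | true => exact htf rfl hb'
    | false =>
      rw [Bool.false_or] at h1
      have hns : n = s := by simpa using h1
      subst hns
      exact absurd (hff rfl hb').1 (by simpa using hσn)
  · intro h1 h2
    rcases Bool.or_eq_false_iff.mp h1 with ⟨hb, hn⟩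
    cases bl' with
    | true =>
      have := hft hb rfl
      simp only [namesM, Finset.mem_insert, not_or] at this
      exact this.2
    | false =>
      rw [Bool.false_or] at h2
      have hσn : σ n = s := by simpa using h2
      have hns : n = s := (hff hb rfl).2 n hσn
      exact absurd hns (by simpa using hn)

theorem cond_rename {s n m : Name} {P : PiM} (hm : m ∉ namesM P) (bl : Bool) :
    Cond s (rename n m) P (bl || (n == s)) (bl || (m == s)) := by
  refine ⟨?_, ?_, ?_⟩
  · intro h1 h2
    rcases Bool.or_eq_false_iff.mp h1 with ⟨-, hn⟩
    rcases Bool.or_eq_false_iff.mp h2 with ⟨-, hmm⟩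
    exact rename_reflect (by simpa using hn) (by simpa using hmm)
  · intro h1 h2
    rcases Bool.or_eq_false_iff.mp h2 with ⟨hbl, hmm⟩
    rw [hbl, Bool.false_or] at h1
    have hns : n = s := by simpa using h1
    subst hns
    exact rename_kill (by simpa using hmm)
  · intro h1 h2
    rcases Bool.or_eq_false_iff.mp h1 with ⟨hbl, hn⟩
    rw [hbl, Bool.false_or] at h2
    have hms : m = s := by simpa using h2
    subst hms
    exact hm

theorem hasOne_subst {s : Name} {c : PiM} {σ : Name → Name}
    (hc1 : ∀ τ, substM τ c = c) (hc2 : ∀ τ (P : PiM), substM τ P = c → P = c) :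
    ∀ (P : PiM) (bl bl' : Bool), Cond s σ P bl bl' →
      (hasOne s c bl P ↔ hasOne s c bl' (substM σ P)) := by
  intro P
  induction P using PiM.indNoSum with
  | hres n P ih =>
    intro bl bl' hcond
    simpa [substM, hasOne] using ih _ _ (Cond.res hcond)
  | hpar P Q ihP ihQ =>
    intro bl bl' hcond
    have hP := Cond.mono (P' := P) (by simp [namesM]) hcond
    have hQ := Cond.mono (P' := Q) (by simp [namesM]) hcond
    simp only [substM, hasOne]
    exact or_congr (ihP _ _ hP) (ihQ _ _ hQ)
  | hrepl P ih =>
    intro bl bl' hcond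
    simpa [substM, hasOne] using ih _ _ (Cond.mono (by simp [namesM]) hcond)
  | hsum gs =>
    intro bl bl' hcond
    simp only [substM, hasOne]
    cases bl <;> cases bl'
    · have h := hcond.1 rfl rfl
      simp [isSum2_subst_iff hc1 hc2 h.1 h.2 gs]
    · have h := hcond.2.2 rfl rfl
      simp only [namesM] at h
      constructor
      · rintro ⟨-, h2⟩; exact absurd (isSum2_mem_names h2) h
      · rintro ⟨h1, -⟩; exact absurd h1 (by simp)
    · have h := hcond.2.1 rfl rfl
      constructor
      · rintro ⟨h1, -⟩; exact absurd h1 (by simp)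
      · rintro ⟨-, h2⟩; exact absurd h2 (isSum2_subst_kill h gs)
    · simp
  | hsucc => intro bl bl' _; simp [substM, hasOne]

theorem hasTwo_subst {s : Name} {c : PiM} {σ : Name → Name}
    (hc1 : ∀ τ, substM τ c = c) (hc2 : ∀ τ (P : PiM), substM τ P = c → P = c) :
    ∀ (P : PiM) (bl bl' : Bool), Cond s σ P bl bl' →
      (hasTwo s c bl P ↔ hasTwo s c bl' (substM σ P)) := by
  intro P
  induction P using PiM.indNoSum with
  | hres n P ih =>
    intro bl bl' hcond
    simpa [substM, hasTwo] using ih _ _ (Cond.res hcond)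
  | hpar P Q ihP ihQ =>
    intro bl bl' hcond
    have hP := Cond.mono (P' := P) (by simp [namesM]) hcond
    have hQ := Cond.mono (P' := Q) (by simp [namesM]) hcond
    simp only [substM, hasTwo]
    exact or_congr (ihP _ _ hP) (or_congr (ihQ _ _ hQ)
      (and_congr (hasOne_subst hc1 hc2 P _ _ hP) (hasOne_subst hc1 hc2 Q _ _ hQ)))
  | hrepl P ih =>
    intro bl bl' hcond
    simpa [substM, hasTwo] using
      hasOne_subst hc1 hc2 P _ _ (Cond.mono (by simp [namesM]) hcond)
  | hsum gs => intro bl bl' _; simp [substM, hasTwo]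
  | hsucc => intro bl bl' _; simp [substM, hasTwo]

theorem goodSum_subst {a b : Name} {σ : Name → Name} {gs : List (Guard × PiM)}
    {bA bB bA' bB' : Bool}
    (hA : Cond a σ (PiM.sum gs) bA bA') (hB : Cond b σ (PiM.sum gs) bB bB') :
    (goodSum a b bA bB gs ↔ goodSum a b bA' bB' (substSummands σ gs)) := by
  unfold goodSum
  refine or_congr ?_ (or_congr ?_ ?_)
  · rw [substSummands_eq_map]; simp
  · cases bA <;> cases bA'
    · have h := hA.1 rfl rfl
      simp [isSum2_subst_iff zeroM_stable.1 zeroM_stable.2 h.1 h.2 gs]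
    · have h := hA.2.2 rfl rfl
      simp only [namesM] at h
      constructor
      · rintro ⟨-, h2⟩; exact absurd (isSum2_mem_names h2) h
      · rintro ⟨h1, -⟩; exact absurd h1 (by simp)
    · have h := hA.2.1 rfl rfl
      constructor
      · rintro ⟨h1, -⟩; exact absurd h1 (by simp)
      · rintro ⟨-, h2⟩; exact absurd h2 (isSum2_subst_kill h gs)
    · simp
  · cases bB <;> cases bB'
    · have h := hB.1 rfl rfl
      simp [isSum2_subst_iff succ_stable.1 succ_stable.2 h.1 h.2 gs]
    · have h := hB.2.2 rfl rfl
      simp only [namesM] at h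
      constructor
      · rintro ⟨-, h2⟩; exact absurd (isSum2_mem_names h2) h
      · rintro ⟨h1, -⟩; exact absurd h1 (by simp)
    · have h := hB.2.1 rfl rfl
      constructor
      · rintro ⟨h1, -⟩; exact absurd h1 (by simp)
      · rintro ⟨-, h2⟩; exact absurd h2 (isSum2_subst_kill h gs)
    · simp

theorem onlyGood_subst {a b : Name} {σ : Name → Name} :
    ∀ (P : PiM) (bA bB bA' bB' : Bool), Cond a σ P bA bA' → Cond b σ P bB bB' →
      (onlyGood a b bA bB P ↔ onlyGood a b bA' bB' (substM σ P)) := by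
  intro P
  induction P using PiM.indNoSum with
  | hres n P ih =>
    intro bA bB bA' bB' hA hB
    simpa [substM, onlyGood] using ih _ _ _ _ (Cond.res hA) (Cond.res hB)
  | hpar P Q ihP ihQ =>
    intro bA bB bA' bB' hA hB
    simp only [substM, onlyGood]
    exact and_congr
      (ihP _ _ _ _ (Cond.mono (by simp [namesM]) hA) (Cond.mono (by simp [namesM]) hB))
      (ihQ _ _ _ _ (Cond.mono (by simp [namesM]) hA) (Cond.mono (by simp [namesM]) hB))
  | hrepl P ih =>
    intro bA bB bA' bB' hA hB
    simpa [substM, onlyGood] using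
      ih _ _ _ _ (Cond.mono (by simp [namesM]) hA) (Cond.mono (by simp [namesM]) hB)
  | hsum gs =>
    intro bA bB bA' bB' hA hB
    simpa [substM, onlyGood] using goodSum_subst hA hB
  | hsucc => intro _ _ _ _ _ _; simp [substM, onlyGood]

/-! ### Invariance under structural congruence -/

theorem hasSucc_cong {P Q : PiM} (h : CongM P Q) : hasSucc P ↔ hasSucc Q := by
  induction h with
  | refl => exact Iff.rfl
  | symm _ ih => exact ih.symm
  | trans _ _ ih1 ih2 => exact ih1.trans ih2
  | resC n _ ih => exact ih
  | parC _ _ ih1 ih2 => exact or_congr ih1 ih2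
  | replC _ ih => exact ih
  | alphaRes hm => exact (hasSucc_subst _ _).symm
  | alphaInp hm => simp [hasSucc]
  | sumPerm hp => simp [hasSucc]
  | parNil P => simp [hasSucc, zeroM]
  | parComm P Q => exact or_comm
  | parAssoc P Q R => exact (or_assoc).symm
  | replUnfold P => simp [hasSucc]
  | resNil n => simp [hasSucc, zeroM]
  | resSwap n m P => exact Iff.rfl
  | resPar Q hn => simp [hasSucc]

theorem hasOne_cong {s : Name} {c : PiM}
    (hc1 : ∀ τ, substM τ c = c) (hc2 : ∀ τ (P : PiM), substM τ P = c → P = c)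
    {P Q : PiM} (h : CongM P Q) : ∀ bl, hasOne s c bl P ↔ hasOne s c bl Q := by
  induction h with
  | refl => intro bl; exact Iff.rfl
  | symm _ ih => intro bl; exact (ih bl).symm
  | trans _ _ ih1 ih2 => intro bl; exact (ih1 bl).trans (ih2 bl)
  | resC n _ ih => intro bl; exact ih _
  | parC _ _ ih1 ih2 => intro bl; exact or_congr (ih1 bl) (ih2 bl)
  | replC _ ih => intro bl; exact ih bl
  | @alphaRes n m P hm =>
    intro bl
    exact hasOne_subst hc1 hc2 P _ _ (cond_rename hm bl)
  | @alphaInp gs₁ gs₂ y x x' P hm =>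
    intro bl
    simp only [hasOne]
    exact and_congr Iff.rfl (isSum2_alphaInp hc1 hc2)
  | sumPerm hp => intro bl; simp only [hasOne]; exact and_congr Iff.rfl (isSum2_perm hp)
  | parNil P => intro bl; simp [hasOne, zeroM, isSum2_nil]
  | parComm P Q => intro bl; exact or_comm
  | parAssoc P Q R => intro bl; exact (or_assoc).symm
  | replUnfold P => intro bl; simp [hasOne]
  | resNil n => intro bl; simp [hasOne, zeroM, isSum2_nil]
  | resSwap n m P =>
    intro bl
    have : ((bl || (n == s)) || (m == s)) = ((bl || (m == s)) || (n == s)) := by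
      cases bl <;> cases hn : (n == s) <;> cases hm : (m == s) <;> rfl
    simp only [hasOne, this]
  | @resPar n P Q hn =>
    intro bl
    simp only [hasOne]
    by_cases hns : n = s
    · subst hns
      simp only [beq_self_eq_true, Bool.or_true]
      refine or_congr ?_ Iff.rfl
      constructor
      · intro h1
        obtain ⟨-, h2⟩ := hasOne_fn _ _ h1
        exact absurd h2 hn
      · intro h1; exact absurd h1 (hasOne_true P)
    · simp only [beq_eq_false_iff_ne.mpr hns, Bool.or_false]

theorem hasTwo_cong {s : Name} {c : PiM}
    (hc1 : ∀ τ, substM τ c = c) (hc2 : ∀ τ (P : PiM), substM τ P = c → P = c)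
    {P Q : PiM} (h : CongM P Q) : ∀ bl, hasTwo s c bl P ↔ hasTwo s c bl Q := by
  induction h with
  | refl => intro bl; exact Iff.rfl
  | symm _ ih => intro bl; exact (ih bl).symm
  | trans _ _ ih1 ih2 => intro bl; exact (ih1 bl).trans (ih2 bl)
  | resC n _ ih => intro bl; exact ih _
  | @parC P P' Q Q' h1 h2 ih1 ih2 =>
    intro bl
    exact or_congr (ih1 bl) (or_congr (ih2 bl)
      (and_congr (hasOne_cong hc1 hc2 h1 bl) (hasOne_cong hc1 hc2 h2 bl)))
  | @replC P Q h ih => intro bl; exact hasOne_cong hc1 hc2 h bl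
  | @alphaRes n m P hm =>
    intro bl
    exact hasTwo_subst hc1 hc2 P _ _ (cond_rename hm bl)
  | alphaInp hm => intro bl; exact Iff.rfl
  | sumPerm hp => intro bl; exact Iff.rfl
  | parNil P =>
    intro bl
    simp [hasTwo, hasOne, zeroM, isSum2_nil]
  | parComm P Q =>
    intro bl
    simp only [hasTwo]
    constructor
    · rintro (h | h | ⟨h1, h2⟩)
      exacts [Or.inr (Or.inl h), Or.inl h, Or.inr (Or.inr ⟨h2, h1⟩)]
    · rintro (h | h | ⟨h1, h2⟩)
      exacts [Or.inr (Or.inl h), Or.inl h, Or.inr (Or.inr ⟨h2, h1⟩)]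
  | parAssoc P Q R =>
    intro bl
    simp only [hasTwo, hasOne]
    tauto
  | replUnfold P =>
    intro bl
    simp only [hasTwo, hasOne]
    constructor
    · intro h; exact Or.inr (Or.inl h)
    · rintro (h | h | ⟨h1, h2⟩)
      exacts [hasTwo_imp_hasOne P bl h, h, h1]
  | resNil n => intro bl; simp [hasTwo, zeroM]
  | resSwap n m P =>
    intro bl
    have : ((bl || (n == s)) || (m == s)) = ((bl || (m == s)) || (n == s)) := by
      cases bl <;> cases hn : (n == s) <;> cases hm : (m == s) <;> rfl
    simp only [hasTwo, this]
  | @resPar n P Q hn =>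
    intro bl
    simp only [hasTwo, hasOne]
    by_cases hns : n = s
    · subst hns
      simp only [beq_self_eq_true, Bool.or_true]
      have hP1 : ∀ bl', hasOne n c bl' P ↔ hasOne n c true P :=
        fun bl' => hasOne_flag_irrel P hn bl' true
      have hP2 : ∀ bl', hasTwo n c bl' P ↔ hasTwo n c true P :=
        fun bl' => hasTwo_flag_irrel P hn bl' true
      rw [hP1 bl, hP2 bl]
    · simp only [beq_eq_false_iff_ne.mpr hns, Bool.or_false]

theorem onlyGood_cong {a b : Name} {P Q : PiM} (h : CongM P Q) :
    ∀ bA bB, onlyGood a b bA bB P ↔ onlyGood a b bA bB Q := by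
  induction h with
  | refl => intro _ _; exact Iff.rfl
  | symm _ ih => intro bA bB; exact (ih bA bB).symm
  | trans _ _ ih1 ih2 => intro bA bB; exact (ih1 bA bB).trans (ih2 bA bB)
  | resC n _ ih => intro bA bB; exact ih _ _
  | parC _ _ ih1 ih2 => intro bA bB; exact and_congr (ih1 bA bB) (ih2 bA bB)
  | replC _ ih => intro bA bB; exact ih bA bB
  | @alphaRes n m P hm =>
    intro bA bB
    exact onlyGood_subst P _ _ _ _ (cond_rename hm bA) (cond_rename hm bB)
  | @alphaInp gs₁ gs₂ y x x' P hm =>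
    intro bA bB
    simp only [onlyGood, goodSum]
    refine or_congr (by simp) (or_congr
      (and_congr Iff.rfl (isSum2_alphaInp zeroM_stable.1 zeroM_stable.2))
      (and_congr Iff.rfl (isSum2_alphaInp succ_stable.1 succ_stable.2)))
  | sumPerm hp =>
    intro bA bB
    simp only [onlyGood, goodSum]
    refine or_congr ?_ (or_congr (and_congr Iff.rfl (isSum2_perm hp))
      (and_congr Iff.rfl (isSum2_perm hp)))
    constructor
    · intro h1; subst h1; exact hp.symm.eq_nil
    · intro h1; subst h1; exact hp.eq_nil
  | parNil P => intro bA bB; simp [onlyGood, zeroM, goodSum]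
  | parComm P Q => intro bA bB; exact and_comm
  | parAssoc P Q R =>
    intro bA bB
    simp only [onlyGood]
    tauto
  | replUnfold P => intro bA bB; simp [onlyGood]
  | resNil n => intro bA bB; simp [onlyGood, zeroM, goodSum]
  | resSwap n m P =>
    intro bA bB
    have e1 : ((bA || (n == a)) || (m == a)) = ((bA || (m == a)) || (n == a)) := by
      cases bA <;> cases hn : (n == a) <;> cases hm : (m == a) <;> rfl
    have e2 : ((bB || (n == b)) || (m == b)) = ((bB || (m == b)) || (n == b)) := by
      cases bB <;> cases hn : (n == b) <;> cases hm : (m == b) <;> rfl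
    simp only [onlyGood, e1, e2]
  | @resPar n P Q hn =>
    intro bA bB
    simp only [onlyGood]
    refine and_congr ?_ Iff.rfl
    by_cases hna : n = a <;> by_cases hnb : n = b
    · have e1 : (n == a) = true := by simpa using hna
      have e2 : (n == b) = true := by simpa using hnb
      have hA : a ∉ fnM P := by rwa [hna] at hn
      have hB : b ∉ fnM P := by rwa [hnb] at hn
      simp only [e1, e2, Bool.or_true]
      exact (onlyGood_flag_irrelA P hA _ _ _).trans (onlyGood_flag_irrelB P hB _ _ _)
    · have e1 : (n == a) = true := by simpa using hna
      have e2 : (n == b) = false := by simpa using hnb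
      have hA : a ∉ fnM P := by rwa [hna] at hn
      simp only [e1, e2, Bool.or_true, Bool.or_false]
      exact onlyGood_flag_irrelA P hA _ _ _
    · have e1 : (n == a) = false := by simpa using hna
      have e2 : (n == b) = true := by simpa using hnb
      have hB : b ∉ fnM P := by rwa [hnb] at hn
      simp only [e1, e2, Bool.or_true, Bool.or_false]
      exact onlyGood_flag_irrelB P hB _ _ _
    · have e1 : (n == a) = false := by simpa using hna
      have e2 : (n == b) = false := by simpa using hnb
      simp only [e1, e2, Bool.or_false]

/-! ### Preservation of the invariant under reduction -/

theorem stepL {a b : Name} (hab : a ≠ b) {P P' : PiM} (h : StepM P P') :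
    ∀ bA bB, onlyGood a b bA bB P →
      onlyGood a b bA bB P' ∧ (hasSucc P → hasSucc P') ∧
      (hasSucc P' ∨ ((hasOne b PiM.succ bB P → hasOne b PiM.succ bB P') ∧
                     (hasTwo b PiM.succ bB P → hasTwo b PiM.succ bB P'))) := by
  induction h with
  | @com gs₁ gs₂ y x z Pc Qc h1 h2 =>
    intro bA bB og
    obtain ⟨og1, og2⟩ := og
    rcases og1 with hnil | ⟨hbA, hA1⟩ | ⟨hbB, hB1⟩
    · subst hnil; simp at h1
    · -- gs₁ is an A-sum
      obtain ⟨hy, hPc⟩ := isSum2_pin_inp hA1 h1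
      subst hy; subst hPc
      rcases og2 with hnil | ⟨-, hA2⟩ | ⟨-, hB2⟩
      · subst hnil; simp at h2
      · obtain ⟨-, hQc⟩ := isSum2_pin_out hA2 h2
        subst hQc
        refine ⟨⟨?_, Or.inl rfl⟩, ?_, ?_⟩
        · rw [substM_zeroM]; exact Or.inl rfl
        · intro hs; exact absurd hs (by simp [hasSucc])
        · refine Or.inr ⟨?_, ?_⟩
          · rintro (⟨-, hB⟩ | ⟨-, hB⟩)
            · exact absurd (isSum2_exclusive hab hA1 hB) id
            · exact absurd (isSum2_exclusive hab hA2 hB) id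
          · rintro (h | h | ⟨⟨-, hB⟩, -⟩)
            · exact h.elim
            · exact h.elim
            · exact absurd (isSum2_exclusive hab hA1 hB) id
      · obtain ⟨hy, -⟩ := isSum2_pin_out hB2 h2
        exact absurd hy hab
    · -- gs₁ is a B-sum
      obtain ⟨hy, hPc⟩ := isSum2_pin_inp hB1 h1
      subst hy; subst hPc
      have hQc : Qc = zeroM := by
        rcases og2 with hnil | ⟨-, hA2⟩ | ⟨-, hB2⟩
        · subst hnil; simp at h2
        · obtain ⟨hy, -⟩ := isSum2_pin_out hA2 h2
          exact absurd hy hab.symm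
        · exact (isSum2_pin_out hB2 h2).2
      subst hQc
      have hsucc' : hasSucc (PiM.par (substM (rename x z) PiM.succ) zeroM) := by
        rw [substM_succ]; exact Or.inl trivial
      refine ⟨⟨?_, Or.inl rfl⟩, fun _ => hsucc', Or.inl hsucc'⟩
      rw [substM_succ]; trivial
  | @parS P P' Q hs ih =>
    intro bA bB og
    obtain ⟨ogP, ogQ⟩ := og
    obtain ⟨i1, i2, i3⟩ := ih bA bB ogP
    refine ⟨⟨i1, ogQ⟩, ?_, ?_⟩
    · rintro (h | h)
      · exact Or.inl (i2 h)
      · exact Or.inr h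
    · rcases i3 with hsucc | ⟨p1, p2⟩
      · exact Or.inl (Or.inl hsucc)
      · refine Or.inr ⟨?_, ?_⟩
        · rintro (h | h)
          · exact Or.inl (p1 h)
          · exact Or.inr h
        · rintro (h | h | ⟨h1, h2⟩)
          · exact Or.inl (p2 h)
          · exact Or.inr (Or.inl h)
          · exact Or.inr (Or.inr ⟨p1 h1, h2⟩)
  | @resS n P P' hs ih =>
    intro bA bB og
    simp only [onlyGood] at og ⊢
    obtain ⟨i1, i2, i3⟩ := ih _ _ og
    exact ⟨i1, i2, i3⟩
  | @congS P P' Q Q' hc1 hs hc2 ih =>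
    intro bA bB og
    obtain ⟨i1, i2, i3⟩ := ih bA bB ((onlyGood_cong hc1 bA bB).mp og)
    refine ⟨(onlyGood_cong hc2 bA bB).mp i1, ?_, ?_⟩
    · intro h
      exact (hasSucc_cong hc2).mp (i2 ((hasSucc_cong hc1).mp h))
    · rcases i3 with hsucc | ⟨p1, p2⟩
      · exact Or.inl ((hasSucc_cong hc2).mp hsucc)
      · refine Or.inr ⟨?_, ?_⟩
        · intro h
          exact (hasOne_cong succ_stable.1 succ_stable.2 hc2 bB).mp
            (p1 ((hasOne_cong succ_stable.1 succ_stable.2 hc1 bB).mp h))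
        · intro h
          exact (hasTwo_cong succ_stable.1 succ_stable.2 hc2 bB).mp
            (p2 ((hasTwo_cong succ_stable.1 succ_stable.2 hc1 bB).mp h))

/-! ### From the invariant to success -/

theorem hasSucc_top : ∀ P : PiM, hasSucc P → HasTopSuccessM P := by
  intro P
  induction P using PiM.indNoSum with
  | hres n P ih =>
    intro h
    obtain ⟨P'', hP⟩ := ih h
    refine ⟨PiM.res n P'', ?_⟩
    have c1 : CongM (PiM.res n P) (PiM.res n (PiM.par PiM.succ P'')) :=
      CongM.resC n (CongM.trans hP (CongM.parComm _ _))
    have c2 : CongM (PiM.par PiM.succ (PiM.res n P'')) (PiM.res n (PiM.par PiM.succ P'')) :=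
      CongM.resPar P'' (by simp [fnM])
    exact CongM.trans (CongM.trans c1 (CongM.symm c2)) (CongM.parComm _ _)
  | hpar P Q ihP ihQ =>
    rintro (h | h)
    · obtain ⟨P'', hP⟩ := ihP h
      refine ⟨PiM.par Q P'', ?_⟩
      exact CongM.trans (CongM.parC hP (CongM.refl Q))
        (CongM.trans (CongM.parComm _ _) (CongM.parAssoc _ _ _))
    · obtain ⟨Q'', hQ⟩ := ihQ h
      exact ⟨PiM.par P Q'', CongM.trans (CongM.parC (CongM.refl P) hQ) (CongM.parAssoc _ _ _)⟩
  | hrepl P ih =>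
    intro h
    obtain ⟨P'', hP⟩ := ih h
    refine ⟨PiM.par (PiM.repl P) P'', ?_⟩
    refine CongM.trans (CongM.replUnfold P) ?_
    refine CongM.trans (CongM.parC hP (CongM.refl _)) ?_
    exact CongM.trans (CongM.parComm _ _) (CongM.parAssoc _ _ _)
  | hsum gs => intro h; exact h.elim
  | hsucc =>
    intro _
    exact ⟨zeroM, CongM.symm (CongM.trans (CongM.parComm _ _) (CongM.parNil _))⟩

def sizeM : PiM → ℕ
  | .res _ P => sizeM P + 1
  | .par P Q => sizeM P + sizeM Q + 1
  | .repl P => sizeM P + 1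
  | .sum _ => 0
  | .succ => 0

theorem sizeM_subst (σ : Name → Name) (P : PiM) : sizeM (substM σ P) = sizeM P := by
  induction P using PiM.indNoSum <;> simp [substM, sizeM, *]

def freshName (s : Finset Name) : Name := (s.sup id) + 1

theorem freshName_not_mem (s : Finset Name) : freshName s ∉ s := by
  intro h
  have h2 : id (freshName s) ≤ s.sup id := Finset.le_sup h
  rw [id_eq] at h2
  unfold freshName at h2
  exact Nat.not_succ_le_self _ h2

/-- Step helper: a step up to structural congruence on the left. -/
theorem stepCong {A A' B : PiM} (h : CongM A A') (s : StepM A' B) : StepM A B :=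
  StepM.congS h s (CongM.refl B)

theorem stepG {b : Name} :
    ∀ (N : ℕ) (P : PiM) (bl : Bool), sizeM P ≤ N → hasOne b PiM.succ bl P →
    ∀ (gs₂ : List (Guard × PiM)) (z : Name), (Guard.out b z, zeroM) ∈ gs₂ →
    ∃ P', StepM (PiM.par P (PiM.sum gs₂)) P' ∧ hasSucc P' := by
  intro N
  induction N with
  | zero =>
    intro P bl hsz h gs₂ z hmem
    cases P with
    | res n P => simp [sizeM] at hsz
    | par P Q => simp [sizeM] at hsz
    | repl P => simp [sizeM] at hsz
    | succ => exact h.elim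
    | sum gs =>
      obtain ⟨-, hB⟩ := h
      obtain ⟨x, hx⟩ := hB.2.2
      refine ⟨_, StepM.com hx hmem, ?_⟩
      rw [substM_succ]
      exact Or.inl trivial
  | succ N ihN =>
    intro P bl hsz h gs₂ z hmem
    cases P with
    | sum gs =>
      obtain ⟨-, hB⟩ := h
      obtain ⟨x, hx⟩ := hB.2.2
      refine ⟨_, StepM.com hx hmem, ?_⟩
      rw [substM_succ]
      exact Or.inl trivial
    | succ => exact h.elim
    | par P Q =>
      simp only [sizeM] at hsz
      rcases h with h | h
      · obtain ⟨T, hT, hTs⟩ := ihN P bl (by omega) h gs₂ z hmem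
        refine ⟨PiM.par T Q, ?_, Or.inl hTs⟩
        refine stepCong ?_ (StepM.parS Q hT)
        -- (P|Q)|S ≡ (P|S)|Q
        refine CongM.trans (CongM.symm (CongM.parAssoc P Q _)) ?_
        refine CongM.trans (CongM.parC (CongM.refl P) (CongM.parComm Q _)) ?_
        exact CongM.parAssoc _ _ _
      · obtain ⟨T, hT, hTs⟩ := ihN Q bl (by omega) h gs₂ z hmem
        refine ⟨PiM.par T P, ?_, Or.inl hTs⟩
        refine stepCong ?_ (StepM.parS P hT)
        -- (P|Q)|S ≡ (Q|S)|P
        refine CongM.trans (CongM.parC (CongM.parComm P Q) (CongM.refl _)) ?_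
        refine CongM.trans (CongM.symm (CongM.parAssoc Q P _)) ?_
        refine CongM.trans (CongM.parC (CongM.refl Q) (CongM.parComm P _)) ?_
        exact CongM.parAssoc _ _ _
    | res n P =>
      simp only [sizeM] at hsz
      -- h : hasOne b succ (bl || (n == b)) P
      have hbn : bl = false ∧ (n == b) = false := by
        have := (hasOne_fn P _ h).1
        exact Bool.or_eq_false_iff.mp this
      set n' := freshName (namesM P ∪ fnM (PiM.sum gs₂) ∪ {b, n}) with hn'
      have hfresh : n' ∉ namesM P ∪ fnM (PiM.sum gs₂) ∪ {b, n} := freshName_not_mem _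
      simp only [Finset.mem_union, Finset.mem_insert, Finset.mem_singleton, not_or] at hfresh
      obtain ⟨⟨hf1, hf2⟩, hf3, hf4⟩ := hfresh
      have hcond : Cond b (rename n n') P (bl || (n == b)) (bl || (n' == b)) :=
        cond_rename hf1 bl
      have h' : hasOne b PiM.succ (bl || (n' == b)) (substM (rename n n') P) :=
        (hasOne_subst succ_stable.1 succ_stable.2 P _ _ hcond).mp h
      obtain ⟨T, hT, hTs⟩ := ihN (substM (rename n n') P) _
        (by rw [sizeM_subst]; omega) h' gs₂ z hmem
      refine ⟨PiM.res n' T, ?_, hTs⟩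
      refine stepCong ?_ (StepM.resS n' hT)
      -- (res n P) | S ≡ res n' ((subst P) | S)
      have c1 : CongM (PiM.res n P) (PiM.res n' (substM (rename n n') P)) :=
        CongM.alphaRes hf1
      refine CongM.trans (CongM.parC c1 (CongM.refl (PiM.sum gs₂))) ?_
      refine CongM.trans (CongM.parComm _ _) ?_
      refine CongM.trans (CongM.resPar _ hf2) ?_
      exact CongM.resC n' (CongM.parComm _ _)
    | repl P =>
      simp only [sizeM] at hsz
      obtain ⟨T, hT, hTs⟩ := ihN P bl (by omega) h gs₂ z hmem
      refine ⟨PiM.par T (PiM.repl P), ?_, Or.inl hTs⟩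
      refine stepCong ?_ (StepM.parS (PiM.repl P) hT)
      -- (repl P) | S ≡ (P | S) | repl P
      refine CongM.trans (CongM.parC (CongM.replUnfold P) (CongM.refl _)) ?_
      refine CongM.trans (CongM.symm (CongM.parAssoc P (PiM.repl P) _)) ?_
      refine CongM.trans (CongM.parC (CongM.refl P) (CongM.parComm _ _)) ?_
      exact CongM.parAssoc _ _ _

theorem stepH {b : Name} :
    ∀ (N : ℕ) (Q : PiM) (bl : Bool) (R : PiM), sizeM Q ≤ N → hasOne b PiM.succ bl Q →
    (∀ (gs₂ : List (Guard × PiM)) (z : Name), (Guard.out b z, zeroM) ∈ gs₂ →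
      ∃ R', StepM (PiM.par R (PiM.sum gs₂)) R' ∧ hasSucc R') →
    ∃ T, StepM (PiM.par R Q) T ∧ hasSucc T := by
  intro N
  induction N with
  | zero =>
    intro Q bl R hsz h hR
    cases Q with
    | res n P => simp [sizeM] at hsz
    | par P Q => simp [sizeM] at hsz
    | repl P => simp [sizeM] at hsz
    | succ => exact h.elim
    | sum gs =>
      obtain ⟨-, hB⟩ := h
      obtain ⟨z, hz⟩ := hB.2.1
      exact hR gs z hz
  | succ N ihN =>
    intro Q bl R hsz h hR
    cases Q with
    | sum gs =>
      obtain ⟨-, hB⟩ := h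
      obtain ⟨z, hz⟩ := hB.2.1
      exact hR gs z hz
    | succ => exact h.elim
    | par P Q =>
      simp only [sizeM] at hsz
      rcases h with h | h
      · obtain ⟨T, hT, hTs⟩ := ihN P bl R (by omega) h hR
        refine ⟨PiM.par T Q, ?_, Or.inl hTs⟩
        refine stepCong ?_ (StepM.parS Q hT)
        exact CongM.parAssoc R P Q
      · obtain ⟨T, hT, hTs⟩ := ihN Q bl R (by omega) h hR
        refine ⟨PiM.par T P, ?_, Or.inl hTs⟩
        refine stepCong ?_ (StepM.parS P hT)
        -- R|(P|Q) ≡ (R|Q)|P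
        refine CongM.trans (CongM.parC (CongM.refl R) (CongM.parComm P Q)) ?_
        exact CongM.parAssoc R Q P
    | res n P =>
      simp only [sizeM] at hsz
      set n' := freshName (namesM P ∪ fnM R ∪ {b, n}) with hn'
      have hfresh : n' ∉ namesM P ∪ fnM R ∪ {b, n} := freshName_not_mem _
      simp only [Finset.mem_union, Finset.mem_insert, Finset.mem_singleton, not_or] at hfresh
      obtain ⟨⟨hf1, hf2⟩, hf3, hf4⟩ := hfresh
      have h' : hasOne b PiM.succ (bl || (n' == b)) (substM (rename n n') P) := by
        have hcond : Cond b (rename n n') P (bl || (n == b)) (bl || (n' == b)) :=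
          cond_rename hf1 bl
        exact (hasOne_subst succ_stable.1 succ_stable.2 P _ _ hcond).mp h
      obtain ⟨T, hT, hTs⟩ := ihN (substM (rename n n') P) _ R
        (by rw [sizeM_subst]; omega) h' hR
      refine ⟨PiM.res n' T, ?_, hTs⟩
      refine stepCong ?_ (StepM.resS n' hT)
      have c1 : CongM (PiM.res n P) (PiM.res n' (substM (rename n n') P)) :=
        CongM.alphaRes hf1
      refine CongM.trans (CongM.parC (CongM.refl R) c1) ?_
      exact CongM.resPar _ hf2
    | repl P =>
      simp only [sizeM] at hsz
      obtain ⟨T, hT, hTs⟩ := ihN P bl R (by omega) h hR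
      refine ⟨PiM.par T (PiM.repl P), ?_, Or.inl hTs⟩
      refine stepCong ?_ (StepM.parS (PiM.repl P) hT)
      refine CongM.trans (CongM.parC (CongM.refl R) (CongM.replUnfold P)) ?_
      exact CongM.parAssoc R P (PiM.repl P)

theorem stepK {b : Name} :
    ∀ (P : PiM) (bl : Bool), hasTwo b PiM.succ bl P → ∃ T, StepM P T ∧ hasSucc T := by
  intro P
  induction P using PiM.indNoSum with
  | hres n P ih =>
    intro bl h
    obtain ⟨T, hT, hTs⟩ := ih _ h
    exact ⟨PiM.res n T, StepM.resS n hT, hTs⟩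
  | hpar P Q ihP ihQ =>
    intro bl h
    rcases h with h | h | ⟨h1, h2⟩
    · obtain ⟨T, hT, hTs⟩ := ihP _ h
      exact ⟨PiM.par T Q, StepM.parS Q hT, Or.inl hTs⟩
    · obtain ⟨T, hT, hTs⟩ := ihQ _ h
      exact ⟨PiM.par T P, stepCong (CongM.parComm P Q) (StepM.parS P hT), Or.inl hTs⟩
    · exact stepH (sizeM Q) Q bl P le_rfl h2
        (fun gs₂ z hm => stepG (sizeM P) P bl le_rfl h1 gs₂ z hm)
  | hrepl P ih =>
    intro bl h
    obtain ⟨T, hT, hTs⟩ := stepH (sizeM P) P bl P le_rfl h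
      (fun gs₂ z hm => stepG (sizeM P) P bl le_rfl h gs₂ z hm)
    refine ⟨PiM.par T (PiM.repl P), ?_, Or.inl hTs⟩
    refine stepCong ?_ (StepM.parS (PiM.repl P) hT)
    refine CongM.trans (CongM.replUnfold P) ?_
    refine CongM.trans (CongM.parC (CongM.refl P) (CongM.replUnfold P)) ?_
    exact CongM.parAssoc P P (PiM.repl P)
  | hsum gs => intro bl h; exact h.elim
  | hsucc => intro bl h; exact h.elim

/-! ### The invariant along executions of `Q`, and the main assembly -/

def InvQ (a b : Name) (S : PiM) : Prop :=
  onlyGood a b false false S ∧ (hasSucc S ∨ hasTwo b PiM.succ false S)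

theorem invQ_init (a b : Name) : InvQ a b (Qterm a b) := by
  have hA : isSum2 a zeroM [(Guard.out a a, zeroM), (Guard.inp a a, zeroM)] :=
    ⟨rfl, ⟨a, by simp⟩, ⟨a, by simp⟩⟩
  have hB : isSum2 b PiM.succ [(Guard.out b b, zeroM), (Guard.inp b b, PiM.succ)] :=
    ⟨rfl, ⟨b, by simp⟩, ⟨b, by simp⟩⟩
  constructor
  · exact ⟨⟨Or.inr (Or.inl ⟨rfl, hA⟩), Or.inr (Or.inr ⟨rfl, hB⟩)⟩,
          ⟨Or.inr (Or.inl ⟨rfl, hA⟩), Or.inr (Or.inr ⟨rfl, hB⟩)⟩⟩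
  · exact Or.inr (Or.inr (Or.inr ⟨Or.inr ⟨rfl, hB⟩, Or.inr ⟨rfl, hB⟩⟩))

theorem invQ_step {a b : Name} (hab : a ≠ b) {S S' : PiM} (h : StepM S S')
    (hi : InvQ a b S) : InvQ a b S' := by
  obtain ⟨og, hd⟩ := hi
  obtain ⟨i1, i2, i3⟩ := stepL hab h false false og
  refine ⟨i1, ?_⟩
  rcases hd with hs | h2
  · exact Or.inl (i2 hs)
  · rcases i3 with hs' | ⟨-, p2⟩
    · exact Or.inl hs'
    · exact Or.inr (p2 h2)

theorem invQ_steps {a b : Name} (hab : a ≠ b) {S S' : PiM} (h : StepsM S S')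
    (hi : InvQ a b S) : InvQ a b S' := by
  induction h with
  | refl => exact hi
  | tail _ h2 ih => exact invQ_step hab h2 ih

theorem invQ_may {a b : Name} {S : PiM} (hi : InvQ a b S) : MayM S := by
  rcases hi.2 with hs | h2
  · exact ⟨S, Relation.ReflTransGen.refl, hasSucc_top S hs⟩
  · obtain ⟨T, hT, hTs⟩ := stepK S false h2
    exact ⟨T, Relation.ReflTransGen.single hT, hasSucc_top T hTs⟩

theorem mayA_steps {T T' : PiA} (h : PiA.Steps T T') (hm : PiA.May T') : PiA.May T := by
  obtain ⟨T'', h2, h3⟩ := hm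
  exact ⟨T'', h.trans h2, h3⟩

theorem good_encoding_Q_always_reaches_success
    (a b : Name) (hab : a ≠ b)
    (enc : PiM → PiA) (equiv : PiA → PiA → Prop) (φ : Name → List Name)
    (hgood : GoodEncoding enc equiv φ) :
    ∀ T : PiA, PiA.Steps (enc (Qterm a b)) T → PiA.May T := by
  intro T hT
  obtain ⟨S', T', hQS', hTT', hequiv⟩ := hgood.sound _ _ hT
  have hInv : InvQ a b S' := invQ_steps hab hQS' (invQ_init a b)
  have hMayM : MayM S' := invQ_may hInv
  have hMayEnc : PiA.May (enc S') := (hgood.successSensitive S').mp hMayM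
  have hMayT' : PiA.May T' := by
    by_contra hn
    exact hgood.successRespecting (enc S') T' hMayEnc hn
      (hgood.equivEquivalence.symm hequiv)
  exact mayA_steps hTT' hMayT'
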